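/- arXiv:1611.03539 — 6 statements merged into one kernel-verified Lean document; each statement's English description precedes it below -/
import Mathlib

section
/- Let E, ε, M ∈ ℝ with M ≠ 0, let f : [0,∞) → ℝ be continuous, and let V : ℝ → ℝ be continuous and bounded below. Let r : (t₁, t₂) → ℝ (with −∞ ≤ t₁ < t₂ ≤ +∞) be a positive C² solution of the radial equation r''(t) = 2(V(t) − E) r(t) + 2ε f(r(t)²) r(t) + M²/r(t)³. Then r(t) does not tend to 0 as t → t₂ (whether t₂ is finite or +∞), and r(t) does not tend to 0 as t → t₁ (whether t₁ is finite or −∞). -/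
open Set Filter Topology

lemma core_right (M : ℝ) (hM : M ≠ 0) (J : Set ℝ) (hJo : IsOpen J) (hJc : Convex ℝ J)
    (l : Filter ℝ) (hne : l.NeBot) (hlJ : l ≤ 𝓟 J)
    (hfwd : ∀ t₀ ∈ J, ∀ᶠ t in l, t₀ < t)
    (r r' r'' : ℝ → ℝ) (hrpos : ∀ t ∈ J, 0 < r t)
    (hr1 : ∀ t ∈ J, HasDerivAt r (r' t) t)
    (hr2 : ∀ t ∈ J, HasDerivAt r' (r'' t) t)
    (hineq : ∀ t ∈ J, M ^ 2 / (2 * r t ^ 3) ≤ r'' t)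
    (h0 : Tendsto r l (𝓝 0)) : False := by
  have hM2 : (0:ℝ) < M ^ 2 := lt_of_le_of_ne (sq_nonneg M) (Ne.symm (pow_ne_zero 2 hM))
  have hEvJ : ∀ᶠ t in l, t ∈ J := le_principal_iff.mp hlJ
  have hpos'' : ∀ t ∈ J, 0 < r'' t := fun t ht =>
    lt_of_lt_of_le (div_pos hM2 (by have := hrpos t ht; positivity)) (hineq t ht)
  -- derivatives of r and r' on J
  have hdr : ∀ t ∈ J, deriv r t = r' t := fun t ht => (hr1 t ht).deriv
  have hdr' : ∀ t ∈ J, deriv r' t = r'' t := fun t ht => (hr2 t ht).deriv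
  -- r' is strictly monotone on J
  have hmono : StrictMonoOn r' J := by
    apply strictMonoOn_of_deriv_pos hJc
    · exact fun t ht => (hr2 t ht).continuousAt.continuousWithinAt
    · intro x hx
      rw [hJo.interior_eq] at hx
      rw [hdr' x hx]
      exact hpos'' x hx
  -- r' < 0 on J
  have hneg : ∀ t ∈ J, r' t < 0 := by
    by_contra hcon
    push_neg at hcon
    obtain ⟨b, hb, hb0⟩ := hcon
    obtain ⟨u, hub, huJ⟩ := ((hfwd b hb).and hEvJ).exists
    -- r strictly increasing on J ∩ Ici b
    have hr_mono : StrictMonoOn r (J ∩ Ici b) := by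
      apply strictMonoOn_of_deriv_pos (hJc.inter (convex_Ici b))
      · exact fun t ht => (hr1 t ht.1).continuousAt.continuousWithinAt
      · intro x hx
        rw [interior_inter, hJo.interior_eq, interior_Ici] at hx
        rw [hdr x hx.1]
        exact lt_of_le_of_lt hb0 (hmono hb hx.1 hx.2)
    have hru : 0 < r u := hrpos u huJ
    have hev1 : ∀ᶠ t in l, r u < r t := by
      filter_upwards [hfwd u huJ, hEvJ] with t hut htJ
      exact hr_mono ⟨huJ, le_of_lt hub⟩ ⟨htJ, le_of_lt (hub.trans hut)⟩ hut
    have hev2 : ∀ᶠ t in l, r t < r u := h0.eventually_lt_const hru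
    obtain ⟨t, h1, h2⟩ := (hev1.and hev2).exists
    linarith
  -- the energy function
  set G : ℝ → ℝ := fun t => r' t ^ 2 / 2 + M ^ 2 / (4 * r t ^ 2) with hGdef
  have hG : ∀ t ∈ J, HasDerivAt G (r' t * (r'' t - M ^ 2 / (2 * r t ^ 3))) t := by
    intro t ht
    have hrt : r t ≠ 0 := (hrpos t ht).ne'
    have h1 : HasDerivAt (fun s => r' s ^ 2 / 2) (2 * r' t ^ 1 * r'' t / 2) t :=
      ((hr2 t ht).pow 2).div_const 2
    have h2 : HasDerivAt (fun s => M ^ 2 / (4 * r s ^ 2))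
        (M ^ 2 / 4 * (-(2 * r t ^ 1 * r' t) / (r t ^ 2) ^ 2)) t := by
      have h3 : HasDerivAt (fun s => (r s ^ 2)⁻¹) (-(2 * r t ^ 1 * r' t) / (r t ^ 2) ^ 2) t :=
        ((hr1 t ht).pow 2).inv (pow_ne_zero 2 hrt)
      have h4 := h3.const_mul (M ^ 2 / 4)
      have he : (fun s => M ^ 2 / (4 * r s ^ 2)) = fun s => M ^ 2 / 4 * (r s ^ 2)⁻¹ := by
        funext s
        rw [div_eq_mul_inv, mul_inv, div_eq_mul_inv]
        ring
      rw [he]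
      exact h4
    have := h1.add h2
    refine this.congr_deriv ?_
    field_simp
    ring
  -- G is antitone on J
  have hGanti : AntitoneOn G J := by
    apply antitoneOn_of_deriv_nonpos hJc
    · exact fun t ht => (hG t ht).continuousAt.continuousWithinAt
    · rw [hJo.interior_eq]
      exact fun t ht => (hG t ht).differentiableAt.differentiableWithinAt
    · intro x hx
      rw [hJo.interior_eq] at hx
      rw [(hG x hx).deriv]
      have h1 := hneg x hx
      have h2 : 0 ≤ r'' x - M ^ 2 / (2 * r x ^ 3) := sub_nonneg.2 (hineq x hx)
      nlinarith
  -- pick a base point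
  obtain ⟨t₀, ht₀⟩ := hEvJ.exists
  have hrt₀ : 0 < r t₀ := hrpos t₀ ht₀
  have hGpos : 0 < G t₀ := by
    have : 0 < M ^ 2 / (4 * r t₀ ^ 2) := div_pos hM2 (by positivity)
    have := sq_nonneg (r' t₀)
    simp only [hGdef]
    positivity
  set δ : ℝ := M ^ 2 / (4 * G t₀) with hδdef
  have hδpos : 0 < δ := div_pos hM2 (by positivity)
  have hsq : Tendsto (fun t => r t ^ 2) l (𝓝 0) := by
    have := h0.pow 2
    simpa using this
  have hev3 : ∀ᶠ t in l, r t ^ 2 < δ := hsq.eventually_lt_const hδpos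
  have hev4 : ∀ᶠ t in l, δ ≤ r t ^ 2 := by
    filter_upwards [hfwd t₀ ht₀, hEvJ] with t h1 h2
    have hGle : G t ≤ G t₀ := hGanti ht₀ h2 (le_of_lt h1)
    have hkey : M ^ 2 / (4 * r t ^ 2) ≤ G t₀ := by
      have := sq_nonneg (r' t)
      simp only [hGdef] at hGle ⊢
      linarith
    have hrt : 0 < r t := hrpos t h2
    rw [div_le_iff₀ (by positivity)] at hkey
    rw [hδdef, div_le_iff₀ (by positivity)]
    nlinarith
  obtain ⟨t, h1, h2⟩ := (hev3.and hev4).exists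
  linarith

/-- The radial equation `r'' = 2(V(t) − E) r + 2ε f(r²) r + M²/r³`
with nonzero angular momentum `M` admits no positive solution on an interval
`(t₁, t₂)` (with possibly infinite endpoints) tending to `0` at either endpoint. -/
theorem radial_solution_not_tendsto_zero
    (E ε M : ℝ) (hM : M ≠ 0)
    (f : ℝ → ℝ) (hf : ContinuousOn f (Set.Ici 0))
    (V : ℝ → ℝ) (hV : Continuous V) (hVbd : ∃ c : ℝ, ∀ t, c ≤ V t)
    (t₁ t₂ : EReal) (h12 : t₁ < t₂)
    (I : Set ℝ) (hI : I = {t : ℝ | t₁ < (t : EReal) ∧ (t : EReal) < t₂})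
    (r : ℝ → ℝ) (hrpos : ∀ t ∈ I, 0 < r t)
    (hr : ContDiffOn ℝ 2 r I)
    (hode : ∀ t ∈ I, deriv (deriv r) t
      = 2 * (V t - E) * r t + 2 * ε * f ((r t) ^ 2) * r t + M ^ 2 / (r t) ^ 3) :
    ¬ Tendsto r ((Filter.comap (fun t : ℝ => (t : EReal)) (𝓝[<] t₂)) ⊓ 𝓟 I) (𝓝 0) ∧
    ¬ Tendsto r ((Filter.comap (fun t : ℝ => (t : EReal)) (𝓝[>] t₁)) ⊓ 𝓟 I) (𝓝 0) := by
  have hM2 : (0:ℝ) < M ^ 2 := lt_of_le_of_ne (sq_nonneg M) (Ne.symm (pow_ne_zero 2 hM))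
  have hIopen : IsOpen I := by
    rw [hI]
    exact isOpen_Ioo.preimage continuous_coe_real_ereal
  -- derivative facts
  have hd1 : ∀ t ∈ I, HasDerivAt r (deriv r t) t := fun t ht =>
    ((hr.differentiableOn two_ne_zero).differentiableAt (hIopen.mem_nhds ht)).hasDerivAt
  have hderiv2 : ContDiffOn ℝ 1 (deriv r) I := hr.deriv_of_isOpen hIopen (by norm_num)
  have hd2 : ∀ t ∈ I, HasDerivAt (deriv r) (deriv (deriv r) t) t := fun t ht =>
    ((hderiv2.differentiableOn one_ne_zero).differentiableAt (hIopen.mem_nhds ht)).hasDerivAt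
  -- constants
  obtain ⟨c, hc⟩ := hVbd
  obtain ⟨B, hB⟩ := isCompact_Icc.exists_bound_of_continuousOn
    (hf.mono (Icc_subset_Ici_self : Icc (0:ℝ) 1 ⊆ Ici 0))
  have hB0 : 0 ≤ B := le_trans (norm_nonneg (f 0)) (hB 0 ⟨le_refl 0, zero_le_one⟩)
  set C : ℝ := 2 * |c - E| + 2 * |ε| * B + 1 with hCdef
  have hC : 0 < C := by positivity
  set η : ℝ := min 1 (M ^ 2 / (2 * C)) with hηdef
  have hηpos : 0 < η := lt_min one_pos (div_pos hM2 (by positivity))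
  have hη1 : η ≤ 1 := min_le_left _ _
  have hη2 : η ≤ M ^ 2 / (2 * C) := min_le_right _ _
  -- the key inequality
  have hkey : ∀ t ∈ I, r t < η → M ^ 2 / (2 * r t ^ 3) ≤ deriv (deriv r) t := by
    intro t ht hrη
    rw [hode t ht]
    have h1 : 0 < r t := hrpos t ht
    have h2 : r t ≤ 1 := le_of_lt (lt_of_lt_of_le hrη hη1)
    have h3 : r t < M ^ 2 / (2 * C) := lt_of_lt_of_le hrη hη2
    have h4 : |f (r t ^ 2)| ≤ B := by
      have : r t ^ 2 ∈ Icc (0:ℝ) 1 := ⟨sq_nonneg _, by nlinarith⟩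
      simpa [Real.norm_eq_abs] using hB _ this
    have h5 : c ≤ V t := hc t
    have e1 : -(2 * |c - E|) * r t ≤ 2 * (V t - E) * r t := by
      nlinarith [neg_abs_le (c - E)]
    have e2 : -(2 * |ε| * B) * r t ≤ 2 * ε * f (r t ^ 2) * r t := by
      have := neg_abs_le (ε * f (r t ^ 2))
      have habs : |ε * f (r t ^ 2)| ≤ |ε| * B := by
        rw [abs_mul]
        exact mul_le_mul_of_nonneg_left h4 (abs_nonneg ε)
      nlinarith
    have e3 : C * r t ≤ M ^ 2 / (2 * r t ^ 3) := by
      rw [le_div_iff₀ (by positivity)]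
      have h6 : r t ^ 3 ≤ 1 := pow_le_one₀ h1.le h2
      have h7 : r t * (2 * C) < M ^ 2 := by
        rw [lt_div_iff₀ (by positivity)] at h3
        exact h3
      nlinarith [mul_le_mul_of_nonneg_left h6 (by positivity : (0:ℝ) ≤ 2 * C * r t)]
    have e4 : M ^ 2 / r t ^ 3 = 2 * (M ^ 2 / (2 * r t ^ 3)) := by
      field_simp
    linarith
  constructor
  · intro h
    have hmem : {t : ℝ | r t < η} ∈
        (Filter.comap (fun t : ℝ => (t : EReal)) (𝓝[<] t₂)) ⊓ 𝓟 I :=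
      h (Iio_mem_nhds hηpos)
    rw [mem_inf_principal] at hmem
    obtain ⟨s, hs, hsub⟩ := mem_comap.mp hmem
    obtain ⟨a, ha, hIoo⟩ := (mem_nhdsLT_iff_exists_Ioo_subset' h12).mp hs
    have ha' : max a t₁ < t₂ := max_lt ha h12
    set J : Set ℝ := (fun t : ℝ => (t : EReal)) ⁻¹' Ioo (max a t₁) t₂ with hJdef
    have hJI : J ⊆ I := by
      intro t ht
      rw [hI]
      exact ⟨lt_of_le_of_lt (le_max_right a t₁) ht.1, ht.2⟩
    have hJη : ∀ t ∈ J, r t < η := by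
      intro t ht
      exact hsub (hIoo ⟨lt_of_le_of_lt (le_max_left a t₁) ht.1, ht.2⟩) (hJI ht)
    have hJo : IsOpen J := isOpen_Ioo.preimage continuous_coe_real_ereal
    have hJc : Convex ℝ J := by
      rw [convex_iff_ordConnected]
      constructor
      intro x hx z hz y hy
      exact ⟨lt_of_lt_of_le hx.1 (EReal.coe_le_coe_iff.2 hy.1),
        lt_of_le_of_lt (EReal.coe_le_coe_iff.2 hy.2) hz.2⟩
    set l : Filter ℝ :=
      ((Filter.comap (fun t : ℝ => (t : EReal)) (𝓝[<] t₂)) ⊓ 𝓟 I) ⊓ 𝓟 J with hldef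
    have hl_eq : l = (Filter.comap (fun t : ℝ => (t : EReal)) (𝓝[<] t₂)) ⊓ 𝓟 J := by
      rw [hldef, inf_assoc, inf_principal, inter_eq_self_of_subset_right hJI]
    have hlJ : l ≤ 𝓟 J := inf_le_right
    have hfwd : ∀ t₀ ∈ J, ∀ᶠ t in l, t₀ < t := by
      intro t₀ ht₀
      have hmem2 : Ioo (t₀ : EReal) t₂ ∈ 𝓝[<] t₂ := Ioo_mem_nhdsLT ht₀.2
      have hmem3 : (fun t : ℝ => (t : EReal)) ⁻¹' Ioo (t₀ : EReal) t₂ ∈ l := by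
        rw [hl_eq]
        exact mem_inf_of_left (preimage_mem_comap hmem2)
      filter_upwards [hmem3] with t ht
      exact EReal.coe_lt_coe_iff.mp ht.1
    have hne : l.NeBot := by
      rw [← forall_mem_nonempty_iff_neBot]
      intro s' hs'
      rw [hl_eq, mem_inf_principal] at hs'
      obtain ⟨w, hw, hwsub⟩ := mem_comap.mp hs'
      obtain ⟨b, hb, hbsub⟩ := (mem_nhdsLT_iff_exists_Ioo_subset' h12).mp hw
      have hbmax : max b (max a t₁) < t₂ := max_lt hb ha'
      obtain ⟨x, hx1, hx2⟩ := EReal.exists_between_coe_real hbmax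
      have hxJ : x ∈ J :=
        ⟨lt_of_le_of_lt (le_max_right b (max a t₁)) hx1, hx2⟩
      have hxw : (x : EReal) ∈ Ioo b t₂ :=
        ⟨lt_of_le_of_lt (le_max_left b (max a t₁)) hx1, hx2⟩
      exact ⟨x, hwsub (hbsub hxw) hxJ⟩
    exact core_right M hM J hJo hJc l hne hlJ hfwd r (deriv r) (deriv (deriv r))
      (fun t ht => hrpos t (hJI ht)) (fun t ht => hd1 t (hJI ht))
      (fun t ht => hd2 t (hJI ht))
      (fun t ht => hkey t (hJI ht) (hJη t ht)) (h.mono_left inf_le_left)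
  · intro h
    have hmem : {t : ℝ | r t < η} ∈
        (Filter.comap (fun t : ℝ => (t : EReal)) (𝓝[>] t₁)) ⊓ 𝓟 I :=
      h (Iio_mem_nhds hηpos)
    rw [mem_inf_principal] at hmem
    obtain ⟨s, hs, hsub⟩ := mem_comap.mp hmem
    obtain ⟨a, ha, hIoo⟩ := (mem_nhdsGT_iff_exists_Ioo_subset' h12).mp hs
    have ha' : t₁ < min a t₂ := lt_min ha h12
    set J : Set ℝ := (fun t : ℝ => (t : EReal)) ⁻¹' Ioo t₁ (min a t₂) with hJdef
    have hJI : J ⊆ I := by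
      intro t ht
      rw [hI]
      exact ⟨ht.1, lt_of_lt_of_le ht.2 (min_le_right a t₂)⟩
    have hJη : ∀ t ∈ J, r t < η := by
      intro t ht
      exact hsub (hIoo ⟨ht.1, lt_of_lt_of_le ht.2 (min_le_left a t₂)⟩) (hJI ht)
    have hJo : IsOpen J := isOpen_Ioo.preimage continuous_coe_real_ereal
    have hJc : Convex ℝ J := by
      rw [convex_iff_ordConnected]
      constructor
      intro x hx z hz y hy
      exact ⟨lt_of_lt_of_le hx.1 (EReal.coe_le_coe_iff.2 hy.1),
        lt_of_le_of_lt (EReal.coe_le_coe_iff.2 hy.2) hz.2⟩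
    set l : Filter ℝ :=
      ((Filter.comap (fun t : ℝ => (t : EReal)) (𝓝[>] t₁)) ⊓ 𝓟 I) ⊓ 𝓟 J with hldef
    have hl_eq : l = (Filter.comap (fun t : ℝ => (t : EReal)) (𝓝[>] t₁)) ⊓ 𝓟 J := by
      rw [hldef, inf_assoc, inf_principal, inter_eq_self_of_subset_right hJI]
    have hlJ : l ≤ 𝓟 J := inf_le_right
    have hbwd : ∀ t₀ ∈ J, ∀ᶠ t in l, t < t₀ := by
      intro t₀ ht₀
      have hmem2 : Ioo t₁ (t₀ : EReal) ∈ 𝓝[>] t₁ := Ioo_mem_nhdsGT ht₀.1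
      have hmem3 : (fun t : ℝ => (t : EReal)) ⁻¹' Ioo t₁ (t₀ : EReal) ∈ l := by
        rw [hl_eq]
        exact mem_inf_of_left (preimage_mem_comap hmem2)
      filter_upwards [hmem3] with t ht
      exact EReal.coe_lt_coe_iff.mp ht.2
    have hne : l.NeBot := by
      rw [← forall_mem_nonempty_iff_neBot]
      intro s' hs'
      rw [hl_eq, mem_inf_principal] at hs'
      obtain ⟨w, hw, hwsub⟩ := mem_comap.mp hs'
      obtain ⟨b, hb, hbsub⟩ := (mem_nhdsGT_iff_exists_Ioo_subset' h12).mp hw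
      have hbmin : t₁ < min b (min a t₂) := lt_min hb ha'
      obtain ⟨x, hx1, hx2⟩ := EReal.exists_between_coe_real hbmin
      have hxJ : x ∈ J :=
        ⟨hx1, lt_of_lt_of_le hx2 (min_le_right b (min a t₂))⟩
      have hxw : (x : EReal) ∈ Ioo t₁ b :=
        ⟨hx1, lt_of_lt_of_le hx2 (min_le_left b (min a t₂))⟩
      exact ⟨x, hwsub (hbsub hxw) hxJ⟩
    -- transfer to the reflected problem via t ↦ -t
    have h0l : Tendsto r l (𝓝 0) := h.mono_left inf_le_left
    refine core_right M hM (Neg.neg ⁻¹' J) (hJo.preimage continuous_neg)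
      ?_ (Filter.map Neg.neg l) (hne.map _) ?_ ?_
      (fun t => r (-t)) (fun t => -(deriv r (-t))) (fun t => deriv (deriv r) (-t))
      (fun t ht => hrpos (-t) (hJI ht)) ?_ ?_
      (fun t ht => hkey (-t) (hJI ht) (hJη (-t) ht)) ?_
    · have := hJc.neg
      have heq : -J = Neg.neg ⁻¹' J := by ext x; simp [Set.mem_neg]
      rwa [heq] at this
    · rw [le_principal_iff, mem_map]
      have : Neg.neg ⁻¹' (Neg.neg ⁻¹' J) = J := by
        ext x; simp
      rw [this]
      exact le_principal_iff.mp hlJ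
    · intro t₀ ht₀
      rw [eventually_map]
      filter_upwards [hbwd (-t₀) ht₀] with t ht
      linarith
    · intro t ht
      have := (hd1 (-t) (hJI ht)).comp t (hasDerivAt_neg t)
      refine this.congr_deriv ?_
      ring
    · intro t ht
      have := ((hd2 (-t) (hJI ht)).comp t (hasDerivAt_neg t)).neg
      refine this.congr_deriv ?_
      ring
    · rw [tendsto_map'_iff]
      have : ((fun t => r (-t)) ∘ Neg.neg) = r := by
        funext x; simp
      rw [this]
      exact h0l
end

section
/- Let f : [0,∞) → ℝ be continuous, F(ζ) = ∫₀^ζ f(s) ds, E, ε, λ ∈ ℝ with λ ≠ 0, and let φ : ℝ → ℝ be continuous, nonnegative, and identically zero outside a bounded interval (α, β). Let q : ℝ → ℝ be a C² solution of q''(t) = 2(λφ(t) − E) q(t) + 2ε f(q(t)²) q(t), and define H₀(t) = q'(t)²/2 + E q(t)² − ε F(q(t)²). Assume H₀(α) = 0, that q(t) > 0 and q'(t) > 0 for all t ∈ [α, β], and that ∫_α^β φ(t) q(t) q'(t) dt > 0. Then H₀(β) = 2λ ∫_α^β φ(t) q(t) q'(t) dt ≠ 0, and consequently q(t) does not tend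 to 0 as t → +∞. -/
open Set Filter Topology intervalIntegral

set_option maxHeartbeats 1000000 in
/-- A potential pulse `V(t) = λφ(t)` supported in `(α, β)` under a rising
cue of a macrostate (`H₀(α) = 0`, `q, q' > 0` on `[α, β]`) pushes the free energy
`H₀ = q'²/2 + Eq² − εF(q²)` off the zero level: `H₀(β) = 2λ∫φ q q' ≠ 0`, so the
trajectory can no longer vanish at `+∞`. -/
theorem potential_pulse_destroys_macrostate
    (f : ℝ → ℝ) (hf : ContinuousOn f (Set.Ici 0))
    (F : ℝ → ℝ) (hF : ∀ ζ : ℝ, F ζ = ∫ s in (0 : ℝ)..ζ, f s)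
    (E ε lam : ℝ) (hlam : lam ≠ 0)
    (α β : ℝ) (hαβ : α < β)
    (φ : ℝ → ℝ) (hφc : Continuous φ) (hφ0 : ∀ t, 0 ≤ φ t)
    (hφsupp : ∀ t ∉ Set.Ioo α β, φ t = 0)
    (q : ℝ → ℝ) (hq : ContDiff ℝ 2 q)
    (hode : ∀ t : ℝ, deriv (deriv q) t
      = 2 * (lam * φ t - E) * q t + 2 * ε * f ((q t) ^ 2) * q t)
    (H₀ : ℝ → ℝ)
    (hH₀ : ∀ t : ℝ, H₀ t = (deriv q t) ^ 2 / 2 + E * (q t) ^ 2 - ε * F ((q t) ^ 2))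
    (hHα : H₀ α = 0)
    (hqpos : ∀ t ∈ Set.Icc α β, 0 < q t ∧ 0 < deriv q t)
    (hint : 0 < ∫ t in α..β, φ t * q t * deriv q t) :
    (H₀ β = 2 * lam * ∫ t in α..β, φ t * q t * deriv q t) ∧ H₀ β ≠ 0 ∧
      ¬ Tendsto q atTop (𝓝 0) := by
  -- basic differentiability facts
  have hq1 : Differentiable ℝ q := hq.differentiable two_ne_zero
  have hqd : ContDiff ℝ 1 (deriv q) := by
    have hq' : ContDiff ℝ (1 + 1) q := by rw [one_add_one_eq_two]; exact hq
    exact (contDiff_succ_iff_deriv.mp hq').2.2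
  have hq'd : Differentiable ℝ (deriv q) := hqd.differentiable one_ne_zero
  have hq'c : Continuous (deriv q) := hq'd.continuous
  have hqc : Continuous q := hq1.continuous
  -- F 0 = 0
  have hF0 : F 0 = 0 := by rw [hF]; simp
  -- bound of f on [0,1]
  obtain ⟨M, hM⟩ : ∃ M, ∀ x ∈ Set.Icc (0:ℝ) 1, ‖f x‖ ≤ M :=
    isCompact_Icc.exists_bound_of_continuousOn (hf.mono (fun x hx => hx.1))
  have hM0 : 0 ≤ M := le_trans (norm_nonneg _) (hM 0 (by norm_num))
  -- Lipschitz-type bound for F near 0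
  have hFb : ∀ ζ : ℝ, 0 ≤ ζ → ζ ≤ 1 → |F ζ| ≤ M * ζ := by
    intro ζ h0 h1
    rw [hF]
    have := intervalIntegral.norm_integral_le_of_norm_le_const
      (a := 0) (b := ζ) (C := M) (f := f) (by
        intro x hx
        rw [Set.uIoc_of_le h0] at hx
        exact hM x ⟨le_of_lt hx.1, le_trans hx.2 h1⟩)
    simpa [abs_of_nonneg h0] using this
  -- derivative of t ↦ F (q t ^ 2)
  have hG : ∀ t : ℝ, HasDerivAt (fun s => F (q s ^ 2))
      (f (q t ^ 2) * (2 * q t * deriv q t)) t := by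
    intro t
    have hqt : HasDerivAt (fun s => q s ^ 2) (2 * q t * deriv q t) t := by
      simpa [mul_comm, mul_assoc] using ((hq1 t).hasDerivAt.fun_pow 2)
    rcases eq_or_ne (q t) 0 with h0 | h0
    · -- q t = 0 : derivative is 0
      have hval : f (q t ^ 2) * (2 * q t * deriv q t) = 0 := by rw [h0]; ring
      rw [hval]
      rw [hasDerivAt_iff_isLittleO]
      have hO1 : (fun s => q s - q t) =O[𝓝 t] (fun s => s - t) :=
        (hq1 t).isBigO_sub
    --  F (q s ^2) is O of (q s - q t)^2
      have hO2 : (fun s => F (q s ^ 2)) =O[𝓝 t] (fun s => (q s - q t) * (q s - q t)) := by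
        rw [Asymptotics.isBigO_iff]
        refine ⟨M, ?_⟩
        have hev : ∀ᶠ s in 𝓝 t, |q s| ≤ 1 := by
          have h : Tendsto q (𝓝 t) (𝓝 0) := h0 ▸ hqc.continuousAt
          have h2 := h (Metric.ball_mem_nhds (0:ℝ) one_pos)
          filter_upwards [h2] with s hs
          have : dist (q s) 0 < 1 := Metric.mem_ball.mp hs
          rw [Real.dist_eq, sub_zero] at this
          exact le_of_lt this
        filter_upwards [hev] with s hs
        have h1 : q s ^ 2 ≤ 1 := by nlinarith [abs_nonneg (q s), le_abs_self (q s), neg_abs_le (q s)]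
        have := hFb (q s ^ 2) (sq_nonneg _) h1
        have heq : (q s - q t) * (q s - q t) = q s ^ 2 := by rw [h0]; ring
        rw [Real.norm_eq_abs, Real.norm_eq_abs, heq, abs_of_nonneg (sq_nonneg (q s))]
        exact this
      have hO3 : (fun s => (q s - q t) * (q s - q t)) =o[𝓝 t] (fun s => s - t) := by
        have hlo : (fun s : ℝ => q s - q t) =o[𝓝 t] (fun _ => (1:ℝ)) := by
          rw [Asymptotics.isLittleO_one_iff]
          have : Tendsto q (𝓝 t) (𝓝 (q t)) := hqc.continuousAt
          simpa using this.sub_const (q t)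
        simpa using hO1.mul_isLittleO hlo
      have := hO2.trans_isLittleO hO3
      simpa [hF0, h0] using this
    · -- q t ≠ 0 : chain rule with FTC
      have hpos : 0 < q t ^ 2 := by positivity
      have hFi : HasDerivAt (fun u => ∫ s in (0:ℝ)..u, f s) (f (q t ^ 2)) (q t ^ 2) := by
        apply intervalIntegral.integral_hasDerivAt_right
        · apply ContinuousOn.intervalIntegrable
          exact hf.mono (by rw [Set.uIcc_of_le (le_of_lt hpos)]; exact fun x hx => hx.1)
        · exact (hf.mono (fun x (hx : x ∈ Set.Ioi (0:ℝ)) => Set.mem_Ici.2 (le_of_lt hx))).stronglyMeasurableAtFilter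
            isOpen_Ioi _ hpos
        · exact (hf (q t ^ 2) (le_of_lt hpos)).continuousAt (Ici_mem_nhds hpos)
      have hFeq : F = fun u => ∫ s in (0:ℝ)..u, f s := funext hF
      rw [hFeq]
      exact hFi.comp t hqt
  -- derivative of H₀
  have hH' : ∀ t : ℝ, HasDerivAt H₀ (2 * lam * (φ t * q t * deriv q t)) t := by
    intro t
    have hd1 : HasDerivAt (fun s => deriv q s ^ 2 / 2)
        (deriv q t * deriv (deriv q) t) t := by
      have := (((hq'd t).hasDerivAt).fun_pow 2).div_const 2
      refine this.congr_deriv ?_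
      ring
    have hd2 : HasDerivAt (fun s => E * q s ^ 2) (E * (2 * q t * deriv q t)) t := by
      have := ((hq1 t).hasDerivAt.fun_pow 2).const_mul E
      refine this.congr_deriv ?_
      ring
    have hd3 : HasDerivAt (fun s => ε * F (q s ^ 2))
        (ε * (f (q t ^ 2) * (2 * q t * deriv q t))) t := (hG t).const_mul ε
    have hsum := (hd1.fun_add hd2).fun_sub hd3
    have hfun : H₀ = fun s => deriv q s ^ 2 / 2 + E * q s ^ 2 - ε * F (q s ^ 2) :=
      funext hH₀
    rw [hfun]
    refine hsum.congr_deriv ?_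
    rw [hode t]
    ring
  -- FTC on [α, β]
  have hcontI : Continuous (fun t => 2 * lam * (φ t * q t * deriv q t)) := by
    continuity
  have hFTC : ∫ t in α..β, 2 * lam * (φ t * q t * deriv q t) = H₀ β - H₀ α :=
    intervalIntegral.integral_eq_sub_of_hasDerivAt (fun t _ => hH' t)
      (hcontI.intervalIntegrable α β)
  have hInt : ∫ t in α..β, 2 * lam * (φ t * q t * deriv q t)
      = 2 * lam * ∫ t in α..β, φ t * q t * deriv q t :=
    intervalIntegral.integral_const_mul _ _
  have hmain : H₀ β = 2 * lam * ∫ t in α..β, φ t * q t * deriv q t := by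
    rw [← hInt, hFTC, hHα, sub_zero]
  have hne : H₀ β ≠ 0 := by
    rw [hmain]
    exact mul_ne_zero (mul_ne_zero two_ne_zero hlam) (ne_of_gt hint)
  refine ⟨hmain, hne, ?_⟩
  -- the non-vanishing part
  intro htend
  set c := H₀ β with hc
  -- H₀ is constant on [β, ∞)
  have hHconst : ∀ t, β ≤ t → H₀ t = c := by
    intro t ht
    rcases eq_or_lt_of_le ht with h | h
    · rw [← h]
    · have hd0 : ∀ x ∈ Set.Ico β t, HasDerivWithinAt H₀ 0 (Set.Ici x) x := by
        intro x hx
        have hφx : φ x = 0 := hφsupp x (fun hmem => absurd hmem.2 (not_lt.2 hx.1))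
        have := (hH' x).hasDerivWithinAt (s := Set.Ici x)
        simpa [hφx] using this
      have hcont : ContinuousOn H₀ (Set.Icc β t) :=
        (Continuous.continuousOn (continuous_iff_continuousAt.2 fun x => (hH' x).continuousAt))
      exact constant_of_has_deriv_right_zero hcont hd0 t ⟨ht, le_rfl⟩
  -- limits as t → ∞
  have hq2lim : Tendsto (fun t => q t ^ 2) atTop (𝓝 0) := by
    have := htend.mul htend
    simpa [pow_two] using this
  have hFlim : Tendsto (fun t => F (q t ^ 2)) atTop (𝓝 0) := by
    apply squeeze_zero_norm' (a := fun t => M * q t ^ 2)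
    · have hev : ∀ᶠ t in atTop, q t ^ 2 ≤ 1 :=
        hq2lim.eventually (eventually_le_nhds one_pos)
      filter_upwards [hev] with t ht
      simpa using hFb (q t ^ 2) (sq_nonneg _) ht
    · simpa using hq2lim.const_mul M
  have hq'lim : Tendsto (fun t => deriv q t ^ 2) atTop (𝓝 (2 * c)) := by
    have haux : Tendsto (fun t => 2 * H₀ t - 2 * E * q t ^ 2 + 2 * ε * F (q t ^ 2))
        atTop (𝓝 (2 * c)) := by
      have h1 : Tendsto (fun t => 2 * H₀ t) atTop (𝓝 (2 * c)) := by
        apply Tendsto.congr' (f₁ := fun _ => 2 * c)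
        · filter_upwards [eventually_ge_atTop β] with t ht
          rw [hHconst t ht]
        · exact tendsto_const_nhds
      have h2 := (hq2lim.const_mul (2 * E)).neg
      have h3 := hFlim.const_mul (2 * ε)
      have := (h1.add h2).add h3
      simpa [sub_eq_add_neg, mul_assoc] using this
    apply haux.congr
    intro t
    rw [hH₀ t]
    ring
  have hcpos : 0 < c := by
    have h2c : 0 ≤ 2 * c :=
      ge_of_tendsto hq'lim (Eventually.of_forall fun t => sq_nonneg _)
    rcases lt_or_eq_of_le (by linarith : (0:ℝ) ≤ c) with h | h
    · exact h
    · exact absurd h.symm hne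
  -- eventually the slope and smallness conditions hold
  have hev1 : ∀ᶠ t in atTop, c < deriv q t ^ 2 :=
    hq'lim.eventually (eventually_gt_nhds (by linarith))
  have hev2 : ∀ᶠ t in atTop, |q t| < 1 := by
    have := htend (Metric.ball_mem_nhds (0:ℝ) one_pos)
    filter_upwards [this] with t ht
    have : dist (q t) 0 < 1 := Metric.mem_ball.mp ht
    rwa [Real.dist_eq, sub_zero] at this
  obtain ⟨T, hT⟩ := (hev1.and hev2).exists_forall_of_atTop
  have hsc : 0 < Real.sqrt c := Real.sqrt_pos.2 hcpos
  set b := T + 3 / Real.sqrt c with hb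
  have hTb : T < b := by
    rw [hb]
    have : 0 < 3 / Real.sqrt c := by positivity
    linarith
  obtain ⟨ξ, hξmem, hξ⟩ := exists_deriv_eq_slope q hTb (hqc.continuousOn)
    (hq1.differentiableOn)
  have hξT : T ≤ ξ := le_of_lt hξmem.1
  have h1 := (hT ξ hξT).1
  have h2 := (hT b (le_of_lt hTb)).2
  have h3 := (hT T le_rfl).2
  have hd : b - T = 3 / Real.sqrt c := by rw [hb]; ring
  have hslope : deriv q ξ ^ 2 = (q b - q T) ^ 2 / (b - T) ^ 2 := by
    rw [hξ]; rw [div_pow]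
  have hnum : (q b - q T) ^ 2 < 4 := by
    have habs : |q b - q T| < 2 := (abs_sub (q b) (q T)).trans_lt (by linarith)
    have hl := abs_lt.mp habs
    have := sq_lt_sq' (by linarith : -(2:ℝ) < q b - q T) hl.2
    norm_num at this; linarith
  have hden : (b - T) ^ 2 = 9 / c := by
    rw [hd, div_pow, Real.sq_sqrt (le_of_lt hcpos)]
    norm_num
  have hfinal : deriv q ξ ^ 2 < 4 * c / 9 := by
    rw [hslope, hden]
    rw [div_lt_iff₀ (by positivity : (0:ℝ) < 9 / c)]
    calc (q b - q T) ^ 2 < 4 := hnum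
      _ = 4 * c / 9 * (9 / c) := by field_simp
  linarith
end

section
/- Let E < 0, ε > 0 and t₀ ∈ ℝ, and let q : [t₀, ∞) → (0, ∞) be a C¹ solution of q'(t) = −√(−2E q(t)² + ε q(t)⁴) with q(t₀) = q_a > 0. Then q(t) → 0 as t → +∞ and ∫_{t₀}^∞ q(t)² dt = (√2/ε) ( √(|E| + ε q_a²/2) − √(|E|) ). -/
open Set Filter Topology MeasureTheory


lemma aux_sinh_tendsto : Tendsto Real.sinh atTop atTop := by
  apply tendsto_atTop_mono' atTop ?_ tendsto_id
  filter_upwards [eventually_gt_atTop 0] with x hx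
  exact (Real.self_lt_sinh_iff.2 hx).le

lemma aux_coth_tendsto : Tendsto (fun s => Real.cosh s / Real.sinh s) atTop (𝓝 1) := by
  have h0 : Tendsto (fun s : ℝ => 1 + Real.exp (-s) * (Real.sinh s)⁻¹) atTop (𝓝 1) := by
    have : Tendsto (fun s : ℝ => Real.exp (-s) * (Real.sinh s)⁻¹) atTop (𝓝 0) := by
      have h1 : Tendsto (fun s : ℝ => Real.exp (-s)) atTop (𝓝 0) :=
        Real.tendsto_exp_atBot.comp tendsto_neg_atTop_atBot
      have h2 : Tendsto (fun s : ℝ => (Real.sinh s)⁻¹) atTop (𝓝 0) :=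
        aux_sinh_tendsto.inv_tendsto_atTop
      simpa using h1.mul h2
    simpa using (tendsto_const_nhds (x := (1:ℝ))).add this
  apply h0.congr'
  filter_upwards [eventually_gt_atTop 0] with s hs
  have hsp : Real.sinh s ≠ 0 := (Real.sinh_pos_iff.2 hs).ne'
  have : Real.cosh s = Real.sinh s + Real.exp (-s) := by
    have := Real.cosh_sub_sinh s; linarith
  rw [this]; field_simp

lemma aux_sqrt_one_add (A eps x : ℝ) (hA : 0 < A) (he : 0 < eps) (hx : 0 < x) :
    Real.sqrt (1 + (Real.sqrt A / (Real.sqrt eps * x))^2)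
      = Real.sqrt (A + eps*x^2) / (Real.sqrt eps * x) := by
  have hse : 0 < Real.sqrt eps := Real.sqrt_pos.2 he
  have h1 : 1 + (Real.sqrt A / (Real.sqrt eps * x))^2
      = (Real.sqrt (A + eps*x^2) / (Real.sqrt eps * x))^2 := by
    rw [div_pow, div_pow, mul_pow, Real.sq_sqrt hA.le, Real.sq_sqrt he.le,
      Real.sq_sqrt (by positivity : (0:ℝ) ≤ A + eps*x^2)]
    field_simp
    ring
  rw [h1, Real.sqrt_sq (by positivity)]

/-- For the Zakharov nonlinearity, a right-vanishing cue
`q' = −√(−2Eq² + εq⁴)` with `q(t₀) = q_a > 0` tends to `0` at `+∞` and contributes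
`(√2/ε)(√(|E| + εq_a²/2) − √|E|)` to the squared `L²` norm. -/
theorem zakharov_cue_norm
    (E ε t₀ q_a : ℝ) (hE : E < 0) (hε : 0 < ε) (hqa : 0 < q_a)
    (q : ℝ → ℝ) (hqpos : ∀ t ∈ Set.Ici t₀, 0 < q t)
    (hq : ∀ t ∈ Set.Ici t₀, HasDerivWithinAt q
      (-Real.sqrt (-(2 * E) * (q t) ^ 2 + ε * (q t) ^ 4)) (Set.Ici t₀) t)
    (hinit : q t₀ = q_a) :
    Tendsto q atTop (𝓝 0) ∧
    ∫ t in Set.Ici t₀, (q t) ^ 2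
      = (Real.sqrt 2 / ε) * (Real.sqrt (|E| + ε * q_a ^ 2 / 2) - Real.sqrt |E|) := by
  set a : ℝ := -(2*E) with ha_def
  have ha : 0 < a := by simp [ha_def]; linarith
  set sa := Real.sqrt a with hsa_def
  set se := Real.sqrt ε with hse_def
  have hsa : 0 < sa := Real.sqrt_pos.2 ha
  have hse : 0 < se := Real.sqrt_pos.2 hε
  have hsa2 : sa^2 = a := Real.sq_sqrt ha.le
  have hse2 : se^2 = ε := Real.sq_sqrt hε.le
  -- rewrite the derivative
  have hq' : ∀ t ∈ Set.Ici t₀, HasDerivWithinAt q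
      (-(q t * Real.sqrt (a + ε * (q t)^2))) (Set.Ici t₀) t := by
    intro t ht
    have hqt := hqpos t ht
    have : Real.sqrt (-(2 * E) * (q t) ^ 2 + ε * (q t) ^ 4)
        = q t * Real.sqrt (a + ε * (q t)^2) := by
      rw [show -(2 * E) * (q t) ^ 2 + ε * (q t) ^ 4 = (q t)^2 * (a + ε * (q t)^2) by ring,
        Real.sqrt_mul (sq_nonneg _), Real.sqrt_sq hqt.le]
    rw [← this]; exact hq t ht
  -- derivative of h t = arsinh (sa / (se * q t)) is sa
  set h : ℝ → ℝ := fun t => Real.arsinh (sa / (se * q t)) with hh_def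
  have hD : ∀ t ∈ Set.Ici t₀, HasDerivWithinAt h sa (Set.Ici t₀) t := by
    intro t ht
    have hqt := hqpos t ht
    set s := Real.sqrt (a + ε * (q t)^2) with hs_def
    have hspos : 0 < s := Real.sqrt_pos.2 (by positivity)
    have hinner : HasDerivWithinAt (fun x => sa / (se * q x))
        ((0 * (se * q t) - sa * (se * (-(q t * s)))) / (se * q t)^2) (Set.Ici t₀) t :=
      (hasDerivWithinAt_const t _ sa).div ((hq' t ht).const_mul se)
        (by positivity)
    have harsinh := (Real.hasDerivAt_arsinh (sa / (se * q t))).comp_hasDerivWithinAt t hinner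
    have hsqrt : Real.sqrt (1 + (sa / (se * q t))^2) = s / (se * q t) :=
      aux_sqrt_one_add a ε (q t) ha hε hqt
    refine harsinh.congr_deriv ?_
    rw [hsqrt]
    have hs2 : s^2 = a + ε * (q t)^2 := Real.sq_sqrt (by positivity)
    field_simp
    ring
  set c₀ := Real.arsinh (sa / (se * q_a)) with hc0_def
  have hc0pos : 0 < c₀ := Real.arsinh_pos_iff.2 (by positivity)
  set u : ℝ → ℝ := fun t => sa * (t - t₀) + c₀ with hu_def
  have hht0 : h t₀ = c₀ := by rw [hh_def]; simp [hinit, hc0_def]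
  -- h y = u y on Ici t₀
  have hformula : ∀ y ∈ Set.Ici t₀, h y = u y := by
    intro y hy
    have := eq_of_has_deriv_right_eq (f := h) (g := u) (f' := fun _ => sa) (a := t₀) (b := y)
      (fun x hx => (hD x hx.1).mono (Set.Ici_subset_Ici.2 hx.1))
      (fun x hx => by
        have : HasDerivAt u (sa * 1) x :=
          (((hasDerivAt_id x).sub_const t₀).const_mul sa).add_const c₀
        simpa using this.hasDerivWithinAt)
      (fun x hx => ((hD x hx.1).continuousWithinAt).mono
        (Set.Icc_subset_Ici_self))
      (by fun_prop)
      (by simp [hht0, hu_def])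
    exact this y ⟨hy, le_refl y⟩
  -- positivity of sinh (u y) and the explicit formula for q
  have hupos : ∀ y ∈ Set.Ici t₀, 0 < u y := by
    intro y hy
    have : 0 ≤ sa * (y - t₀) := by
      have : (0:ℝ) ≤ y - t₀ := by simpa using sub_nonneg.2 (Set.mem_Ici.1 hy)
      positivity
    simp only [hu_def]; linarith
  have hsinhpos : ∀ y ∈ Set.Ici t₀, 0 < Real.sinh (u y) :=
    fun y hy => Real.sinh_pos_iff.2 (hupos y hy)
  have hqform : ∀ y ∈ Set.Ici t₀, q y = sa / (se * Real.sinh (u y)) := by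
    intro y hy
    have h1 : Real.sinh (h y) = sa / (se * q y) := Real.sinh_arsinh _
    rw [hformula y hy] at h1
    have hqy := hqpos y hy
    have hS := hsinhpos y hy
    field_simp at h1 ⊢
    linarith [h1]
  -- tendsto
  have huTop : Tendsto u atTop atTop := by
    apply tendsto_atTop_add_const_right
    exact (tendsto_atTop_add_const_right atTop (-t₀) tendsto_id).const_mul_atTop hsa
      |>.congr (fun x => by simp only [id_eq]; ring)
  have hsinhTop : Tendsto (fun t => Real.sinh (u t)) atTop atTop :=
    aux_sinh_tendsto.comp huTop
  have htend : Tendsto q atTop (𝓝 0) := by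
    have h0 : Tendsto (fun t => sa / (se * Real.sinh (u t))) atTop (𝓝 0) := by
      have : Tendsto (fun t => se * Real.sinh (u t)) atTop atTop :=
        hsinhTop.const_mul_atTop hse
      simpa [div_eq_mul_inv] using this.inv_tendsto_atTop.const_mul sa
    apply h0.congr'
    filter_upwards [eventually_ge_atTop t₀] with t ht
    exact (hqform t ht).symm
  refine ⟨htend, ?_⟩
  -- the integral
  rw [MeasureTheory.integral_Ici_eq_integral_Ioi]
  have hcongr : ∫ t in Set.Ioi t₀, (q t)^2
      = ∫ t in Set.Ioi t₀, a / (ε * (Real.sinh (u t))^2) := by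
    apply MeasureTheory.setIntegral_congr_fun measurableSet_Ioi
    intro t ht
    have ht' : t ∈ Set.Ici t₀ := Set.mem_Ici.2 (le_of_lt ht)
    show (q t)^2 = _
    rw [hqform t ht']
    have hS := hsinhpos t ht'
    rw [div_pow, mul_pow, hsa2, hse2]
  rw [hcongr]
  set g : ℝ → ℝ := fun t => -(sa/ε) * (Real.cosh (u t) / Real.sinh (u t)) with hg_def
  have huderiv : ∀ x : ℝ, HasDerivAt u sa x := by
    intro x
    have : HasDerivAt u (sa * 1) x :=
      (((hasDerivAt_id x).sub_const t₀).const_mul sa).add_const c₀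
    simpa using this
  have hgderiv : ∀ x ∈ Set.Ioi t₀, HasDerivAt g (a / (ε * (Real.sinh (u x))^2)) x := by
    intro x hx
    have hS := hsinhpos x (Set.mem_Ici.2 (le_of_lt hx))
    have hcosh : HasDerivAt (fun t => Real.cosh (u t)) (Real.sinh (u x) * sa) x :=
      (Real.hasDerivAt_cosh (u x)).comp x (huderiv x)
    have hsinh : HasDerivAt (fun t => Real.sinh (u t)) (Real.cosh (u x) * sa) x :=
      (Real.hasDerivAt_sinh (u x)).comp x (huderiv x)
    have hdiv := (hcosh.div hsinh hS.ne').const_mul (-(sa/ε))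
    refine hdiv.congr_deriv ?_
    have hid : Real.cosh (u x)^2 - Real.sinh (u x)^2 = 1 := Real.cosh_sq_sub_sinh_sq (u x)
    field_simp
    nlinarith [hid, hS, hsa2]
  have hgcont : ContinuousWithinAt g (Set.Ici t₀) t₀ := by
    have hS := hsinhpos t₀ (le_refl t₀)
    have : ContinuousAt g t₀ := by
      apply ContinuousAt.mul continuousAt_const
      exact ContinuousAt.div (by fun_prop) (by fun_prop) hS.ne'
    exact this.continuousWithinAt
  have hglim : Tendsto g atTop (𝓝 (-(sa/ε))) := by
    have h1 : Tendsto (fun t => Real.cosh (u t) / Real.sinh (u t)) atTop (𝓝 1) :=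
      aux_coth_tendsto.comp huTop
    have h2 := h1.const_mul (-(sa/ε))
    rw [mul_one] at h2
    exact h2
  have hnonneg : ∀ x ∈ Set.Ioi t₀, 0 ≤ a / (ε * (Real.sinh (u x))^2) :=
    fun x hx => by positivity
  have hint := MeasureTheory.integral_Ioi_of_hasDerivAt_of_nonneg hgcont hgderiv hnonneg hglim
  rw [hint]
  -- compute g t₀ and finish
  have hut0 : u t₀ = c₀ := by simp [hu_def]
  have hcoshc0 : Real.cosh c₀ = Real.sqrt (a + ε * q_a^2) / (se * q_a) := by
    rw [hc0_def, Real.cosh_arsinh]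
    exact aux_sqrt_one_add a ε q_a ha hε hqa
  have hsinhc0 : Real.sinh c₀ = sa / (se * q_a) := Real.sinh_arsinh _
  have hgt0 : g t₀ = -(Real.sqrt (a + ε * q_a^2) / ε) := by
    rw [hg_def]
    simp only [hut0, hcoshc0, hsinhc0]
    field_simp
  rw [hgt0]
  -- final algebra
  have hEabs : |E| = -E := abs_of_neg hE
  have h2a : Real.sqrt (a + ε * q_a^2) = Real.sqrt 2 * Real.sqrt (|E| + ε * q_a^2/2) := by
    rw [← Real.sqrt_mul (by norm_num : (0:ℝ) ≤ 2)]
    congr 1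
    rw [hEabs]; simp [ha_def]; ring
  have h2b : sa = Real.sqrt 2 * Real.sqrt (|E|) := by
    rw [hsa_def, ← Real.sqrt_mul (by norm_num : (0:ℝ) ≤ 2)]
    congr 1
    rw [hEabs]; simp [ha_def]
  rw [h2a, h2b]
  ring
end

section
/- Let Ω > 0, ε ≠ 0, E < 0 and q₀ > 0 satisfy E = −Ω²/2 + ε q₀²/2 and (4/(ε√2)) ( √(−E + ε q₀²/2) − √(−E) ) = 1. Then √(−2E) = Ω − ε/2; consequently E = −(1/2)(Ω − ε/2)² and necessarily ε ≤ 2Ω. -/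
/-- For the Zakharov equation with the delta well `V = −Ωδ`, the
eigenvalue relation `E = −Ω²/2 + εq₀²/2` together with the unit-norm condition
`(4/(ε√2))(√(−E + εq₀²/2) − √(−E)) = 1` forces `√(−2E) = Ω − ε/2`, hence
`E = −(1/2)(Ω − ε/2)²` and necessarily `ε ≤ 2Ω`. -/
theorem zakharov_delta_well_unit_norm_eigenvalue
    (Ω ε E q₀ : ℝ) (hΩ : 0 < Ω) (hε : ε ≠ 0) (hE : E < 0) (hq₀ : 0 < q₀)
    (heig : E = -Ω ^ 2 / 2 + ε * q₀ ^ 2 / 2)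
    (hnorm : (4 / (ε * Real.sqrt 2)) *
      (Real.sqrt (-E + ε * q₀ ^ 2 / 2) - Real.sqrt (-E)) = 1) :
    Real.sqrt (-(2 * E)) = Ω - ε / 2 ∧
    E = -(1 / 2) * (Ω - ε / 2) ^ 2 ∧ ε ≤ 2 * Ω := by
  have hs2 : (0:ℝ) < Real.sqrt 2 := Real.sqrt_pos.mpr (by norm_num)
  have hs2sq : Real.sqrt 2 ^ 2 = 2 := Real.sq_sqrt (by norm_num)
  have harg : -E + ε * q₀ ^ 2 / 2 = Ω ^ 2 / 2 := by linarith
  have h1 : Real.sqrt (-E + ε * q₀ ^ 2 / 2) = Ω / Real.sqrt 2 := by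
    rw [harg, show Ω ^ 2 / 2 = (Ω / Real.sqrt 2) ^ 2 by
      field_simp; exact hs2sq]
    exact Real.sqrt_sq (by positivity)
  rw [h1] at hnorm
  have h2 : Real.sqrt 2 * Real.sqrt 2 = 2 := Real.mul_self_sqrt (by norm_num)
  have hkey : Real.sqrt (-E) = (Ω - ε / 2) / Real.sqrt 2 := by
    field_simp at hnorm ⊢
    rw [hs2sq] at hnorm
    linarith [hnorm]
  have hpos : 0 < Real.sqrt (-E) := Real.sqrt_pos.mpr (by linarith)
  have hΩε : 0 < Ω - ε / 2 := by
    have h := hkey ▸ hpos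
    have h' := mul_pos h hs2
    rwa [div_mul_cancel₀ _ hs2.ne'] at h'
  have hmain : Real.sqrt (-(2 * E)) = Ω - ε / 2 := by
    have : -(2 * E) = ((Ω - ε / 2) / Real.sqrt 2) ^ 2 * 2 := by
      rw [← hkey, Real.sq_sqrt (by linarith : (0:ℝ) ≤ -E)]; ring
    rw [this]
    rw [show ((Ω - ε / 2) / Real.sqrt 2) ^ 2 * 2 = (Ω - ε/2)^2 * (2 / Real.sqrt 2 ^2) by ring,
      hs2sq]
    norm_num
    exact Real.sqrt_sq hΩε.le
  refine ⟨hmain, ?_, by linarith⟩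
  have : -(2*E) = (Ω - ε/2)^2 := by
    rw [← hmain, Real.sq_sqrt (by linarith : (0:ℝ) ≤ -(2*E))]
  linarith
end

section
/- Let ε < 0 and E ∈ ℝ, and define ψ_G : ℝ → ℝ by ψ_G(x) = exp( (E + ε)/(2ε) + ε x² ). Then ψ_G is a C² positive function satisfying −½ψ_G''(x) − E ψ_G(x) + ε · ln(ψ_G(x)²) · ψ_G(x) = 0 for all x ∈ ℝ, ψ_G(x) → 0 as x → ±∞, and ∫_{−∞}^{∞} ψ_G(x)² dx < ∞. -/
open Set Filter Topology MeasureTheory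

/-- The gausson `ψ_G(x) = exp((E + ε)/(2ε) + εx²)` (for `ε < 0`) is a
positive `C²` solution of the logarithmic nonlinear Schrödinger equation
`−½ψ'' − Eψ + ε ln(ψ²) ψ = 0`, vanishes at `±∞`, and is square integrable. -/
theorem gausson_is_macrostate
    (ε E : ℝ) (hε : ε < 0)
    (ψ : ℝ → ℝ)
    (hψ : ∀ x : ℝ, ψ x = Real.exp ((E + ε) / (2 * ε) + ε * x ^ 2)) :
    ContDiff ℝ 2 ψ ∧ (∀ x : ℝ, 0 < ψ x) ∧
    (∀ x : ℝ, -(1 / 2) * deriv (deriv ψ) x - E * ψ x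
      + ε * Real.log ((ψ x) ^ 2) * ψ x = 0) ∧
    Tendsto ψ atTop (𝓝 0) ∧ Tendsto ψ atBot (𝓝 0) ∧
    Integrable (fun x : ℝ => (ψ x) ^ 2) := by
  have hψ' : ψ = fun x => Real.exp ((E + ε) / (2 * ε) + ε * x ^ 2) := funext hψ
  subst hψ'
  set c : ℝ := (E + ε) / (2 * ε) with hc
  have hg : ∀ x : ℝ, HasDerivAt (fun x : ℝ => c + ε * x ^ 2) (ε * (2 * x)) x := by
    intro x
    simpa using ((hasDerivAt_pow 2 x).const_mul ε).const_add c
  have hf : ∀ x : ℝ, HasDerivAt (fun x : ℝ => Real.exp (c + ε * x ^ 2))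
      (Real.exp (c + ε * x ^ 2) * (ε * (2 * x))) x := fun x => (hg x).exp
  have hd1 : deriv (fun x : ℝ => Real.exp (c + ε * x ^ 2))
      = fun x => Real.exp (c + ε * x ^ 2) * (ε * (2 * x)) := funext fun x => (hf x).deriv
  have hf2 : ∀ x : ℝ, HasDerivAt (fun x : ℝ => Real.exp (c + ε * x ^ 2) * (ε * (2 * x)))
      (Real.exp (c + ε * x ^ 2) * (ε * (2 * x)) * (ε * (2 * x))
        + Real.exp (c + ε * x ^ 2) * (2 * ε)) x := by
    intro x
    have h2 : HasDerivAt (fun x : ℝ => ε * (2 * x)) (2 * ε) x := by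
      simpa [mul_comm] using ((hasDerivAt_id x).const_mul 2).const_mul ε
    exact (hf x).mul h2
  refine ⟨?_, fun x => Real.exp_pos _, ?_, ?_, ?_, ?_⟩
  · exact (Real.contDiff_exp.comp (contDiff_const.add (contDiff_const.mul (contDiff_id.pow 2))))
  · intro x
    rw [hd1, (hf2 x).deriv, Real.log_pow, Real.log_exp]
    have hε2 : 2 * ε ≠ 0 := by linarith
    field_simp [hc]
    have hc2 : c * ε * 2 = E + ε := by
      rw [hc, div_mul_eq_mul_div, div_mul_eq_mul_div, div_eq_iff hε2]
      ring
    linear_combination Real.exp (c + ε * x ^ 2) * hc2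
  · have : Tendsto (fun x : ℝ => c + ε * x ^ 2) atTop atBot := by
      apply tendsto_atBot_add_const_left
      exact (tendsto_const_mul_pow_atBot_iff.2 ⟨two_ne_zero, hε⟩)
    exact Real.tendsto_exp_atBot.comp this
  · have : Tendsto (fun x : ℝ => c + ε * x ^ 2) atBot atBot := by
      apply tendsto_atBot_add_const_left
      have hsq : Tendsto (fun x : ℝ => x ^ 2) atBot atTop := by
        have h1 : Tendsto (fun y : ℝ => y ^ 2) atTop atTop :=
          tendsto_pow_atTop (by norm_num)
        have h2 : Tendsto (fun x : ℝ => -x) atBot atTop := tendsto_neg_atBot_atTop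
        have := h1.comp h2
        simpa [Function.comp_def, neg_sq] using this
      exact hsq.const_mul_atTop_of_neg hε
    exact Real.tendsto_exp_atBot.comp this
  · have hb : (0:ℝ) < -(2 * ε) := by linarith
    have h := (integrable_exp_neg_mul_sq hb).const_mul (Real.exp (2 * c))
    apply h.congr
    filter_upwards with x
    rw [← Real.exp_add, ← Real.exp_nat_mul]
    congr 1
    push_cast
    ring
end

section
/- Let E ∈ ℝ, ε ∈ ℝ, b > 0 and V₀ ≠ 0, and let q : [−b, b] → ℝ be a C² solution of q''(t) = 2(V₀ − E) q(t) + 2ε q(t)³ satisfying the cue-matching conditions q'(−b)² = −2E q(−b)² + ε q(−b)⁴ and q'(b)² = −2E q(b)² + ε q(b)⁴. Then q(b)² = q(−b)². -/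
open Set Filter Topology

/-- For the Zakharov equation in a rectangular well of depth `V₀ ≠ 0`
on `[−b, b]`, a solution of `q'' = 2(V₀ − E)q + 2εq³` matching the vanishing cues at both
endpoints (`q'(±b)² = −2Eq(±b)² + εq(±b)⁴`) has equal endpoint amplitudes:
`q(b)² = q(−b)²`. -/
theorem zakharov_square_well_endpoint_parity
    (E ε b V₀ : ℝ) (hb : 0 < b) (hV₀ : V₀ ≠ 0)
    (q p : ℝ → ℝ)
    (hq : ∀ t ∈ Set.Icc (-b) b, HasDerivWithinAt q (p t) (Set.Icc (-b) b) t)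
    (hp : ∀ t ∈ Set.Icc (-b) b, HasDerivWithinAt p
      (2 * (V₀ - E) * q t + 2 * ε * (q t) ^ 3) (Set.Icc (-b) b) t)
    (h₁ : (p (-b)) ^ 2 = -(2 * E) * (q (-b)) ^ 2 + ε * (q (-b)) ^ 4)
    (h₂ : (p b) ^ 2 = -(2 * E) * (q b) ^ 2 + ε * (q b) ^ 4) :
    (q b) ^ 2 = (q (-b)) ^ 2 := by
  set H : ℝ → ℝ := fun t => (p t) ^ 2 / 2 + (E - V₀) * (q t) ^ 2 - ε / 2 * (q t) ^ 4 with hH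
  have hHd : ∀ t ∈ Set.Icc (-b) b, HasDerivWithinAt H 0 (Set.Icc (-b) b) t := by
    intro t ht
    have h1 := hq t ht
    have h2 := hp t ht
    have := (((h2.pow 2).div_const 2).add ((h1.pow 2).const_mul (E - V₀))).sub
      ((h1.pow 4).const_mul (ε / 2))
    convert this using 1
    · rfl
    · rfl
    · rfl
    rw [show (2:ℕ) - 1 = 1 from rfl, show (4:ℕ) - 1 = 3 from rfl]
    push_cast
    ring
  have hconst : H b = H (-b) := by
    have : ∀ x ∈ Set.Icc (-b) b, H x = H (-b) := by
      apply constant_of_has_deriv_right_zero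
      · intro t ht
        exact (hHd t ht).continuousWithinAt
      · intro t ht
        exact (hHd t (Set.mem_Icc_of_Ico ht)).mono_of_mem_nhdsWithin (Icc_mem_nhdsGE_of_mem ht)
    exact this b (Set.right_mem_Icc.2 (by linarith))
  have hb' : (-b : ℝ) ≤ b := by linarith
  simp only [hH] at hconst
  rw [h₁, h₂] at hconst
  have : -V₀ * (q b) ^ 2 = -V₀ * (q (-b)) ^ 2 := by ring_nf at hconst ⊢; linarith
  have hV : -V₀ ≠ 0 := neg_ne_zero.2 hV₀
  exact mul_left_cancel₀ hV this
end
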